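/- Let g > 0, ω ≠ 0, and let f : ℝ → (0,∞) be continuously differentiable with f′(s₀) < 0 for some s₀. For any constant c₀ ∈ ℝ define X(t,s) = s + t·(c₀ + 2√(g f(s) + ω²f(s)²/4) + (g/ω)·log(2g + ω²f(s) + 2ω√(g f(s) + ω²f(s)²/4))). Then ∂X/∂s (t,s) = 1 + t·f′(s)·(3g + ω²f(s))/(2√(g f(s) + ω²f(s)²/4)) for all t, s. Moreover, setting t* = inf over {s : f′(s) < 0} of 2√(g f(s) + ω²f(s)²/4)/(−f′(s)·(3g + ω²f(s))), one has ∂X/∂s (t,s) > 0 for every s ∈ ℝ and every t with 0 ≤ t < t*, and ∂X/∂s(t₀,s₀) = 0 at t₀ = 2√(g f(s₀) + ω²f(s₀)²/4)/(−f′(s₀)·(3g + ω²f(s₀))). -/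

import Mathlib

open Real

/-- The characteristic map `X(t,s)` of a simple wave of the vorticity-modified shallow
water equations satisfies `∂X/∂s = 1 + t f′(s)(3g + ω²f(s))/(2√(gf(s) + ω²f(s)²/4))`;
this is positive for `0 ≤ t < t*`, where `t*` is the breaking time, and vanishes at
`(t₀, s₀)`. -/
theorem characteristic_map_derivative_and_breaking_time
    (g ω c₀ : ℝ) (hg : 0 < g) (hω : ω ≠ 0)
    (f : ℝ → ℝ) (hf : ContDiff ℝ 1 f) (hfpos : ∀ s : ℝ, 0 < f s)
    (s₀ : ℝ) (hs₀ : deriv f s₀ < 0)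
    (X : ℝ → ℝ → ℝ)
    (hX : ∀ t s : ℝ, X t s
      = s + t * (c₀ + 2 * Real.sqrt (g * f s + ω ^ 2 * f s ^ 2 / 4)
        + g / ω * Real.log (2 * g + ω ^ 2 * f s
          + 2 * ω * Real.sqrt (g * f s + ω ^ 2 * f s ^ 2 / 4))))
    (tstar : ℝ)
    (htstar : tstar = sInf ((fun s => 2 * Real.sqrt (g * f s + ω ^ 2 * f s ^ 2 / 4)
      / (-(deriv f s) * (3 * g + ω ^ 2 * f s))) '' {s : ℝ | deriv f s < 0}))
    (t₀ : ℝ)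
    (ht₀ : t₀ = 2 * Real.sqrt (g * f s₀ + ω ^ 2 * f s₀ ^ 2 / 4)
      / (-(deriv f s₀) * (3 * g + ω ^ 2 * f s₀))) :
    (∀ t s : ℝ, deriv (fun s' => X t s') s
      = 1 + t * deriv f s * (3 * g + ω ^ 2 * f s)
        / (2 * Real.sqrt (g * f s + ω ^ 2 * f s ^ 2 / 4))) ∧
    (∀ s : ℝ, ∀ t : ℝ, 0 ≤ t → t < tstar → 0 < deriv (fun s' => X t s') s) ∧
    deriv (fun s' => X t₀ s') s₀ = 0 := by
  -- positivity of the quantity under the square root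
  have hQpos : ∀ s : ℝ, 0 < g * f s + ω ^ 2 * f s ^ 2 / 4 := fun s => by
    have h1 := hfpos s
    have h2 : 0 < ω ^ 2 := by positivity
    nlinarith
  have hsqpos : ∀ s : ℝ, 0 < Real.sqrt (g * f s + ω ^ 2 * f s ^ 2 / 4) := fun s =>
    Real.sqrt_pos.mpr (hQpos s)
  have hsqsq : ∀ s : ℝ, (Real.sqrt (g * f s + ω ^ 2 * f s ^ 2 / 4)) ^ 2
      = g * f s + ω ^ 2 * f s ^ 2 / 4 := fun s => Real.sq_sqrt (hQpos s).le
  -- positivity of the argument of the logarithm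
  have hApos : ∀ s : ℝ, 0 < 2 * g + ω ^ 2 * f s
      + 2 * ω * Real.sqrt (g * f s + ω ^ 2 * f s ^ 2 / 4) := fun s => by
    set sq := Real.sqrt (g * f s + ω ^ 2 * f s ^ 2 / 4) with hsq
    have h1 := hsqpos s
    have h2 := hsqsq s
    rw [← hsq] at h1 h2
    have hF := hfpos s
    have hω2 : 0 < ω ^ 2 := by positivity
    have hprod : (2 * g + ω ^ 2 * f s + 2 * ω * sq)
        * (2 * g + ω ^ 2 * f s - 2 * ω * sq) = 4 * g ^ 2 := by
      linear_combination (-4 * ω ^ 2 : ℝ) * h2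
    have hsum : 0 < (2 * g + ω ^ 2 * f s + 2 * ω * sq)
        + (2 * g + ω ^ 2 * f s - 2 * ω * sq) := by nlinarith
    by_contra hcon
    push_neg at hcon
    have hB : 0 < 2 * g + ω ^ 2 * f s - 2 * ω * sq := by linarith
    nlinarith
  have hEpos : ∀ s : ℝ, 0 < 3 * g + ω ^ 2 * f s := fun s => by
    nlinarith [hfpos s, sq_nonneg ω]
  -- the key derivative computation
  have key : ∀ t s : ℝ, HasDerivAt (fun s' => X t s')
      (1 + t * deriv f s * (3 * g + ω ^ 2 * f s)
        / (2 * Real.sqrt (g * f s + ω ^ 2 * f s ^ 2 / 4))) s := by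
    intro t s
    have hfun : (fun s' => X t s') = fun s' =>
        s' + t * (c₀ + 2 * Real.sqrt (g * f s' + ω ^ 2 * f s' ^ 2 / 4)
        + g / ω * Real.log (2 * g + ω ^ 2 * f s'
          + 2 * ω * Real.sqrt (g * f s' + ω ^ 2 * f s' ^ 2 / 4))) := funext (hX t)
    rw [hfun]
    have hdf : HasDerivAt f (deriv f s) s :=
      ((hf.differentiable one_ne_zero) s).hasDerivAt
    have hQ : HasDerivAt (fun s' => g * f s' + ω ^ 2 * f s' ^ 2 / 4)
        (deriv f s * (g + ω ^ 2 * f s / 2)) s := by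
      have h1 : HasDerivAt (fun s' => g * f s') (g * deriv f s) s := hdf.const_mul g
      have h2 : HasDerivAt (fun s' => f s' ^ 2) (2 * f s * deriv f s) s := by
        simpa using hdf.fun_pow 2
      have h3 := (h2.const_mul (ω ^ 2)).div_const 4
      have := h1.fun_add h3
      refine this.congr_deriv ?_
      ring
    have hS : HasDerivAt (fun s' => Real.sqrt (g * f s' + ω ^ 2 * f s' ^ 2 / 4))
        (deriv f s * (g + ω ^ 2 * f s / 2)
          / (2 * Real.sqrt (g * f s + ω ^ 2 * f s ^ 2 / 4))) s :=
      hQ.sqrt (ne_of_gt (hQpos s))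
    have hA : HasDerivAt (fun s' => 2 * g + ω ^ 2 * f s'
        + 2 * ω * Real.sqrt (g * f s' + ω ^ 2 * f s' ^ 2 / 4))
        (ω ^ 2 * deriv f s + 2 * ω * (deriv f s * (g + ω ^ 2 * f s / 2)
          / (2 * Real.sqrt (g * f s + ω ^ 2 * f s ^ 2 / 4)))) s := by
      have h1 : HasDerivAt (fun s' => 2 * g + ω ^ 2 * f s') (ω ^ 2 * deriv f s) s :=
        (hdf.const_mul (ω ^ 2)).const_add (2 * g)
      exact h1.add (hS.const_mul (2 * ω))
    have hL : HasDerivAt (fun s' => Real.log (2 * g + ω ^ 2 * f s'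
        + 2 * ω * Real.sqrt (g * f s' + ω ^ 2 * f s' ^ 2 / 4)))
        ((ω ^ 2 * deriv f s + 2 * ω * (deriv f s * (g + ω ^ 2 * f s / 2)
          / (2 * Real.sqrt (g * f s + ω ^ 2 * f s ^ 2 / 4))))
          / (2 * g + ω ^ 2 * f s
            + 2 * ω * Real.sqrt (g * f s + ω ^ 2 * f s ^ 2 / 4))) s :=
      hA.log (ne_of_gt (hApos s))
    have hbracket := ((hS.const_mul 2).const_add c₀).fun_add (hL.const_mul (g / ω))
    have htotal := (hasDerivAt_id s).fun_add (hbracket.const_mul t)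
    refine htotal.congr_deriv ?_
    set sq := Real.sqrt (g * f s + ω ^ 2 * f s ^ 2 / 4) with hsqdef
    have h1 : sq ≠ 0 := ne_of_gt (hsqpos s)
    have h2 : (2 * g + ω ^ 2 * f s + 2 * ω * sq) ≠ 0 := ne_of_gt (hApos s)
    have h3 := hsqsq s
    field_simp
    ring
  have keyderiv : ∀ t s : ℝ, deriv (fun s' => X t s') s
      = 1 + t * deriv f s * (3 * g + ω ^ 2 * f s)
        / (2 * Real.sqrt (g * f s + ω ^ 2 * f s ^ 2 / 4)) :=
    fun t s => (key t s).deriv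
  refine ⟨keyderiv, ?_, ?_⟩
  · intro s t ht htlt
    rw [keyderiv]
    rcases le_or_gt 0 (deriv f s) with hd | hd
    · have : 0 ≤ t * deriv f s * (3 * g + ω ^ 2 * f s)
          / (2 * Real.sqrt (g * f s + ω ^ 2 * f s ^ 2 / 4)) := by
        apply div_nonneg
        · exact mul_nonneg (mul_nonneg ht hd) (hEpos s).le
        · positivity
      linarith
    · -- tstar ≤ T(s)
      have hmem : (fun s => 2 * Real.sqrt (g * f s + ω ^ 2 * f s ^ 2 / 4)
          / (-(deriv f s) * (3 * g + ω ^ 2 * f s))) s ∈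
          ((fun s => 2 * Real.sqrt (g * f s + ω ^ 2 * f s ^ 2 / 4)
          / (-(deriv f s) * (3 * g + ω ^ 2 * f s))) '' {s : ℝ | deriv f s < 0}) :=
        Set.mem_image_of_mem _ hd
      have hbdd : BddBelow ((fun s => 2 * Real.sqrt (g * f s + ω ^ 2 * f s ^ 2 / 4)
          / (-(deriv f s) * (3 * g + ω ^ 2 * f s))) '' {s : ℝ | deriv f s < 0}) := by
        refine ⟨0, fun x hx => ?_⟩
        obtain ⟨u, hu, rfl⟩ := hx
        have hu' : deriv f u < 0 := hu
        apply div_nonneg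
        · positivity
        · exact mul_nonneg (by linarith) (hEpos u).le
      have hle : tstar ≤ 2 * Real.sqrt (g * f s + ω ^ 2 * f s ^ 2 / 4)
          / (-(deriv f s) * (3 * g + ω ^ 2 * f s)) := by
        rw [htstar]; exact csInf_le hbdd hmem
      set sq := Real.sqrt (g * f s + ω ^ 2 * f s ^ 2 / 4) with hsqdef
      have hsq := hsqpos s
      have hD : 0 < -(deriv f s) * (3 * g + ω ^ 2 * f s) :=
        mul_pos (by linarith) (hEpos s)
      have htT : t < 2 * sq / (-(deriv f s) * (3 * g + ω ^ 2 * f s)) :=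
        lt_of_lt_of_le htlt hle
      have htD : t * (-(deriv f s) * (3 * g + ω ^ 2 * f s)) < 2 * sq :=
        (lt_div_iff₀ hD).mp htT
      have h2sq : 0 < 2 * sq := by linarith
      have h1 : t * (-(deriv f s) * (3 * g + ω ^ 2 * f s)) / (2 * sq) < 1 :=
        (div_lt_one h2sq).mpr htD
      have h2 : t * deriv f s * (3 * g + ω ^ 2 * f s) / (2 * sq)
          = -(t * (-(deriv f s) * (3 * g + ω ^ 2 * f s)) / (2 * sq)) := by ring
      rw [h2]; linarith
  · rw [keyderiv, ht₀]
    set sq := Real.sqrt (g * f s₀ + ω ^ 2 * f s₀ ^ 2 / 4) with hsqdef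
    have hsq : sq ≠ 0 := ne_of_gt (hsqpos s₀)
    have hd : deriv f s₀ ≠ 0 := ne_of_lt hs₀
    have hE : (3 * g + ω ^ 2 * f s₀) ≠ 0 := ne_of_gt (hEpos s₀)
    field_simp
    ring
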